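/- Let G be a locally compact abelian topological group and let φ ∈ COS(G). Then there exists a continuous character χ : G → S¹ (a continuous homomorphism of G into the circle group S¹ = {z ∈ ℂ : |z| = 1}) such that φ(x) = (χ(x) + conj(χ(x)))/2 for all x ∈ G. In particular, ‖φ‖_∞ ≤ 1. -/

import Mathlib

/-- The cosine class `COS(G)`: nonzero bounded continuous `φ : G → ℂ` satisfying the
d'Alembert equation `φ(x) φ(y) = (φ(x+y) + φ(x-y))/2`. -/
def CosClass (G : Type*) [AddCommGroup G] [TopologicalSpace G] : Set (G → ℂ) :=
  {φ | Continuous φ ∧ (∃ C, ∀ x, ‖φ x‖ ≤ C) ∧ φ ≠ 0 ∧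
    ∀ x y, φ x * φ y = (φ (x + y) + φ (x - y)) / 2}

/-- Auxiliary "exponential" built from a d'Alembert function. -/
noncomputable def Eaux {G : Type*} [AddCommGroup G] (φ : G → ℂ) (y₀ : G) (m : ℂ) (z : G) : ℂ :=
  φ z + m * (φ (z + y₀) - φ z * φ y₀)

section Aux

variable {G : Type*} [AddCommGroup G] (φ : G → ℂ)

lemma dal_sin (hd : ∀ x y, φ x * φ y = (φ (x + y) + φ (x - y)) / 2) (y₀ x y : G) :
    φ (x + y + y₀) - φ (x + y) * φ y₀ =
      φ x * (φ (y + y₀) - φ y * φ y₀) + (φ (x + y₀) - φ x * φ y₀) * φ y := by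
  have h1 := hd x (y + y₀)
  have h2 := hd (x + y₀) y
  have h3 := hd x y
  have h4 := hd (x - y) y₀
  simp only [show x + (y + y₀) = x + y + y₀ from by abel,
    show x - (y + y₀) = x - y - y₀ from by abel,
    show x + y₀ + y = x + y + y₀ from by abel,
    show x + y₀ - y = x - y + y₀ from by abel] at h1 h2
  linear_combination -h1 - h2 + 2 * φ y₀ * h3 + h4

lemma dal_prod (hd : ∀ x y, φ x * φ y = (φ (x + y) + φ (x - y)) / 2) (y₀ x y : G) :
    (φ (x + y₀) - φ x * φ y₀) * (φ (y + y₀) - φ y * φ y₀) =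
      (φ y₀ ^ 2 - 1) * (φ (x + y) - φ (x - y)) / 2 := by
  have k1 := hd (x + y₀) (y + y₀)
  have k2 := hd (x + y₀) y
  have k3 := hd x (y + y₀)
  have k4 := hd x y
  have k5 := hd (x + y + y₀) y₀
  have k6 := hd (x - y) y₀
  simp only [show x + y₀ + (y + y₀) = x + y + y₀ + y₀ from by abel,
    show x + y₀ - (y + y₀) = x - y from by abel,
    show x + y₀ + y = x + y + y₀ from by abel,
    show x + y₀ - y = x - y + y₀ from by abel,
    show x + (y + y₀) = x + y + y₀ from by abel,
    show x - (y + y₀) = x - y - y₀ from by abel,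
    show x + y + y₀ - y₀ = x + y from by abel] at k1 k2 k3 k5
  linear_combination k1 - φ y₀ * k2 - φ y₀ * k3 + φ y₀ ^ 2 * k4 - k5 + φ y₀ * k6

lemma Eaux_mul (hd : ∀ x y, φ x * φ y = (φ (x + y) + φ (x - y)) / 2) {y₀ : G} {m : ℂ}
    (hm : m ^ 2 * (φ y₀ ^ 2 - 1) = 1) (x y : G) :
    Eaux φ y₀ m (x + y) = Eaux φ y₀ m x * Eaux φ y₀ m y := by
  have s := dal_sin φ hd y₀ x y
  have p := dal_prod φ hd y₀ x y
  have h := hd x y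
  simp only [Eaux]
  linear_combination m * s - m ^ 2 * p - h - (φ (x + y) - φ (x - y)) / 2 * hm

lemma char_abs_one (χ : G → ℂ) (C : ℝ)
    (h0 : χ 0 = 1) (hmul : ∀ x y, χ (x + y) = χ x * χ y)
    (hb : ∀ x, ‖χ x + χ (-x)‖ ≤ C) (x : G) : ‖χ x‖ = 1 := by
  have hinv : ∀ z, χ z * χ (-z) = 1 := by
    intro z; rw [← hmul, add_neg_cancel, h0]
  have hpow : ∀ (n : ℕ) (z : G), χ (n • z) = χ z ^ n := by
    intro n
    induction n with
    | zero => intro z; simpa using h0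
    | succ n ih => intro z; rw [succ_nsmul, hmul, ih, pow_succ]
  have hle : ∀ z, ‖χ z‖ ≤ 1 := by
    intro z
    by_contra hgt
    push_neg at hgt
    have hzinv : χ (-z) = (χ z)⁻¹ := eq_inv_of_mul_eq_one_right (hinv z)
    obtain ⟨n, hn⟩ := pow_unbounded_of_one_lt (C + 1) hgt
    have h2 : χ (-(n • z)) = χ (-z) ^ n := by
      rw [show -(n • z) = n • (-z) from (smul_neg n z).symm, hpow]
    have h1 : ‖χ z ^ n‖ ≤ C + ‖χ (-z) ^ n‖ := by
      have hb' := hb (n • z)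
      rw [hpow, h2] at hb'
      calc ‖χ z ^ n‖ = ‖(χ z ^ n + χ (-z) ^ n) - χ (-z) ^ n‖ := by ring_nf
        _ ≤ ‖χ z ^ n + χ (-z) ^ n‖ + ‖χ (-z) ^ n‖ := norm_sub_le _ _
        _ ≤ C + ‖χ (-z) ^ n‖ := by linarith
    have h3 : ‖χ (-z) ^ n‖ ≤ 1 := by
      rw [hzinv, norm_pow, norm_inv]
      apply pow_le_one₀ (by positivity)
      rw [inv_le_one_iff₀]
      right; linarith
    have h4 : ‖χ z ^ n‖ = ‖χ z‖ ^ n := norm_pow _ _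
    linarith [hn, h4 ▸ h1]
  have h3 : ‖χ x‖ * ‖χ (-x)‖ = 1 := by rw [← norm_mul, hinv x, norm_one]
  have h5 : ‖χ x‖ = 1 :=
    le_antisymm (hle x) (by nlinarith [hle (-x), norm_nonneg (χ x), norm_nonneg (χ (-x))])
  exact h5

end Aux

/-- Every `φ ∈ COS(G)` is of the form `φ = (χ + conj χ)/2` for some
continuous character `χ : G → S¹`; in particular `‖φ‖_∞ ≤ 1`. -/
theorem cosClass_eq_re_character {G : Type*} [AddCommGroup G] [TopologicalSpace G]
    [IsTopologicalAddGroup G] [LocallyCompactSpace G] [T2Space G]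
    (φ : G → ℂ) (hφ : φ ∈ CosClass G) :
    (∃ χ : G → ℂ, Continuous χ ∧ (∀ x, ‖χ x‖ = 1) ∧
      (∀ x y, χ (x + y) = χ x * χ y) ∧
      ∀ x, φ x = (χ x + (starRingEnd ℂ) (χ x)) / 2) ∧
    ∀ x, ‖φ x‖ ≤ 1 := by
  obtain ⟨hcont, ⟨C, hC⟩, hne, hd⟩ := hφ
  obtain ⟨x₀, hx₀⟩ : ∃ x, φ x ≠ 0 := by
    by_contra h; push_neg at h; exact hne (funext fun x => h x)
  have h0 : φ 0 = 1 := by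
    have h := hd x₀ 0
    simp only [add_zero, sub_zero] at h
    have h' : φ x₀ * φ 0 = φ x₀ * 1 := by linear_combination h
    exact mul_left_cancel₀ hx₀ h'
  have heven : ∀ x, φ (-x) = φ x := by
    intro x
    have h := hd 0 x
    simp only [zero_add, zero_sub, h0, one_mul] at h
    linear_combination -2 * h
  have main : ∃ χ : G → ℂ, Continuous χ ∧ (∀ x, ‖χ x‖ = 1) ∧
      (∀ x y, χ (x + y) = χ x * χ y) ∧
      ∀ x, φ x = (χ x + (starRingEnd ℂ) (χ x)) / 2 := by
    by_cases hcase : ∀ y, φ y ^ 2 = 1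
    · -- φ takes values in {±1} and is itself a (real) character
      have hpm : ∀ y, φ y = 1 ∨ φ y = -1 := by
        intro y
        have hy := hcase y
        have h' : (φ y - 1) * (φ y + 1) = 0 := by linear_combination hy
        rcases mul_eq_zero.mp h' with h' | h'
        · exact Or.inl (sub_eq_zero.mp h')
        · exact Or.inr (eq_neg_of_add_eq_zero_left h')
      refine ⟨φ, hcont, ?_, ?_, ?_⟩
      · intro x; rcases hpm x with h | h <;> simp [h]
      · intro x y
        have h := hd x y
        have hc : (φ x * φ y) ^ 2 = 1 := by rw [mul_pow, hcase, hcase, one_mul]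
        rcases hpm (x + y) with ha | ha <;> rcases hpm (x - y) with hb | hb
        · rw [ha]; rw [ha, hb] at h; linear_combination -h
        · exfalso
          rw [ha, hb] at h
          rw [show φ x * φ y = 0 from by linear_combination h] at hc
          norm_num at hc
        · exfalso
          rw [ha, hb] at h
          rw [show φ x * φ y = 0 from by linear_combination h] at hc
          norm_num at hc
        · rw [ha]; rw [ha, hb] at h; linear_combination -h
      · intro x; rcases hpm x with h | h <;> rw [h] <;> norm_num
    · push_neg at hcase
      obtain ⟨y₀, hy₀⟩ := hcase
      obtain ⟨μ, hμ⟩ := IsAlgClosed.exists_pow_nat_eq (φ y₀ ^ 2 - 1) (n := 2) (by norm_num)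
      have hμ0 : μ ≠ 0 := by
        intro hz
        rw [hz] at hμ
        exact hy₀ (by linear_combination -hμ)
      set χ : G → ℂ := Eaux φ y₀ μ⁻¹ with hχ
      have hm : (μ⁻¹) ^ 2 * (φ y₀ ^ 2 - 1) = 1 := by
        rw [← hμ]; field_simp
      have hmul : ∀ x y, χ (x + y) = χ x * χ y := Eaux_mul φ hd hm
      have hcontχ : Continuous χ := by
        have h1 : Continuous fun z : G => φ (z + y₀) := hcont.comp (continuous_add_right y₀)
        exact hcont.add (continuous_const.mul (h1.sub (hcont.mul continuous_const)))
      have h0χ : χ 0 = 1 := by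
        show Eaux φ y₀ μ⁻¹ 0 = 1
        simp [Eaux, h0]
      have hsum : ∀ x, χ x + χ (-x) = 2 * φ x := by
        intro x
        show Eaux φ y₀ μ⁻¹ x + Eaux φ y₀ μ⁻¹ (-x) = 2 * φ x
        simp only [Eaux]
        have h1 : φ (-x + y₀) = φ (x - y₀) := by
          rw [show -x + y₀ = -(x - y₀) from by abel, heven]
        have h2 := heven x
        have h3 := hd x y₀
        linear_combination (1 - μ⁻¹ * φ y₀) * h2 + μ⁻¹ * h1 - 2 * μ⁻¹ * h3
      have habs : ∀ x, ‖χ x‖ = 1 := by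
        refine char_abs_one χ (2 * C) h0χ hmul ?_
        intro x
        rw [hsum x]
        calc ‖(2 : ℂ) * φ x‖ = 2 * ‖φ x‖ := by rw [norm_mul]; norm_num
          _ ≤ 2 * C := by linarith [hC x]
      refine ⟨χ, hcontχ, habs, hmul, ?_⟩
      intro x
      have hinv : χ x * χ (-x) = 1 := by rw [← hmul, add_neg_cancel, h0χ]
      have hconj : (starRingEnd ℂ) (χ x) = χ (-x) := by
        have h1 : (χ x)⁻¹ = (starRingEnd ℂ) (χ x) :=
          Complex.inv_eq_conj (habs x)
        rw [← h1]
        exact (eq_inv_of_mul_eq_one_right hinv).symm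
      rw [hconj]
      linear_combination -(hsum x) / 2
  refine ⟨main, ?_⟩
  obtain ⟨χ, _, habs, _, hrep⟩ := main
  intro x
  rw [hrep x, norm_div]
  have h1 := norm_add_le (χ x) ((starRingEnd ℂ) (χ x))
  rw [Complex.norm_conj, habs x] at h1
  rw [show ‖(2:ℂ)‖ = 2 by norm_num]
  linarith
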